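/- If f : X → Y is an open perfect (closed, continuous, with compact fibers) surjection and Y is star-K-Scheepers, then X is star-K-Scheepers. -/
import Mathlib


open Set

/-- Star of a set `A` with respect to a family `P`: `St(A,P) = ⋃{B ∈ P : A ∩ B ≠ ∅}`. -/
def st {X : Type*} (A : Set X) (P : Set (Set X)) : Set X :=
  ⋃₀ {B | B ∈ P ∧ (A ∩ B).Nonempty}

/-- `U` is an open cover of the space. -/
def IsOpenCover {X : Type*} [TopologicalSpace X] (U : Set (Set X)) : Prop :=
  (∀ V ∈ U, IsOpen V) ∧ ⋃₀ U = Set.univ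

/-- An ω-cover: an open cover such that every finite subset lies in some member. -/
def IsOmegaCover {X : Type*} [TopologicalSpace X] (U : Set (Set X)) : Prop :=
  IsOpenCover U ∧ ∀ F : Set X, F.Finite → ∃ V ∈ U, F ⊆ V

/-- The star-K-Scheepers property. -/
def StarKScheepers (X : Type*) [TopologicalSpace X] : Prop :=
  ∀ U : ℕ → Set (Set X), (∀ n, IsOpenCover (U n)) →
    ∃ K : ℕ → Set X, (∀ n, IsCompact (K n)) ∧
      IsOmegaCover {S | ∃ n, S = st (K n) (U n)}

/-- Open perfect preimages of star-K-Scheepers spaces are star-K-Scheepers. -/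
theorem starKScheepers_open_perfect_preimage {X Y : Type*} [TopologicalSpace X]
    [TopologicalSpace Y] (f : X → Y) (hcont : Continuous f) (hopen : IsOpenMap f)
    (hclosed : IsClosedMap f) (hfib : ∀ y : Y, IsCompact (f ⁻¹' {y}))
    (hsurj : Function.Surjective f) (hY : StarKScheepers Y) :
    StarKScheepers X := by
  classical
  have hproper : IsProperMap f :=
    isProperMap_iff_isClosedMap_and_compact_fibers.2 ⟨hcont, hclosed, hfib⟩
  intro U hU
  -- choose finite subcovers of fibers, with each member meeting the fiber
  have hchoice : ∀ n (y : Y), ∃ t : Finset (U n : Set (Set X)),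
      (f ⁻¹' {y} ⊆ ⋃ i ∈ t, (i : Set X)) ∧ ∀ i ∈ t, ((f ⁻¹' {y}) ∩ (i : Set X)).Nonempty := by
    intro n y
    have hcov : f ⁻¹' {y} ⊆ ⋃ i : (U n : Set (Set X)), (i : Set X) := by
      rw [← sUnion_eq_iUnion, (hU n).2]; exact subset_univ _
    obtain ⟨t, ht⟩ := (hfib y).elim_finite_subcover (fun i : (U n : Set (Set X)) => (i : Set X))
      (fun i => (hU n).1 i i.2) hcov
    refine ⟨t.filter (fun i => ((f ⁻¹' {y}) ∩ (i : Set X)).Nonempty), ?_, ?_⟩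
    · intro x hx
      obtain ⟨i, hit, hxi⟩ := mem_iUnion₂.1 (ht hx)
      exact mem_iUnion₂.2 ⟨i, Finset.mem_filter.2 ⟨hit, ⟨x, hx, hxi⟩⟩, hxi⟩
    · intro i hi; exact (Finset.mem_filter.1 hi).2
  choose T hT1 hT2 using hchoice
  set W : ℕ → Y → Set X := fun n y => ⋃ i ∈ T n y, (i : Set X) with hW
  set V : ℕ → Y → Set Y :=
    fun n y => (f '' (W n y)ᶜ)ᶜ ∩ ⋂ i ∈ T n y, f '' (i : Set X) with hV
  have hWopen : ∀ n y, IsOpen (W n y) := fun n y =>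
    isOpen_biUnion fun i _ => (hU n).1 i i.2
  have hVopen : ∀ n y, IsOpen (V n y) := by
    intro n y
    exact ((hclosed _ (hWopen n y).isClosed_compl).isOpen_compl).inter
      (isOpen_biInter_finset fun i _ => hopen _ ((hU n).1 i i.2))
  have hyV : ∀ n y, y ∈ V n y := by
    intro n y
    constructor
    · rintro ⟨x, hx, rfl⟩
      exact hx (hT1 n (f x) rfl)
    · refine mem_iInter₂.2 fun i hi => ?_
      obtain ⟨x, hxf, hxi⟩ := hT2 n y i hi
      exact ⟨x, hxi, hxf⟩
  have hVpre : ∀ n y, f ⁻¹' (V n y) ⊆ W n y := by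
    intro n y x hx
    by_contra hxW
    exact hx.1 ⟨x, hxW, rfl⟩
  -- the covers of Y
  set 𝒱 : ℕ → Set (Set Y) := fun n => range (V n) with h𝒱
  have h𝒱cov : ∀ n, IsOpenCover (𝒱 n) := by
    intro n
    refine ⟨?_, ?_⟩
    · rintro B ⟨y, rfl⟩; exact hVopen n y
    · refine eq_univ_of_forall fun y => ⟨V n y, ⟨y, rfl⟩, hyV n y⟩
  obtain ⟨K, hKc, ⟨⟨homem, hocov⟩, homega⟩⟩ := hY 𝒱 h𝒱cov
  refine ⟨fun n => f ⁻¹' (K n), fun n => hproper.isCompact_preimage (hKc n), ?_⟩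
  -- key inclusion
  have key : ∀ n, f ⁻¹' (st (K n) (𝒱 n)) ⊆ st (f ⁻¹' (K n)) (U n) := by
    intro n x hx
    obtain ⟨B, ⟨⟨y, rfl⟩, hne⟩, hxB⟩ := hx
    obtain ⟨i, hi, hxi⟩ := mem_iUnion₂.1 (hVpre n y hxB)
    obtain ⟨z, hzK, hzV⟩ := hne
    obtain ⟨u, hui, hfu⟩ := mem_iInter₂.1 hzV.2 i hi
    exact ⟨i, ⟨i.2, ⟨u, by simp [hfu, hzK], hui⟩⟩, hxi⟩
  have hmemX : ∀ S ∈ {S | ∃ n, S = st (f ⁻¹' (K n)) (U n)}, IsOpen S := by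
    rintro S ⟨n, rfl⟩
    exact isOpen_sUnion fun B hB => (hU n).1 B hB.1
  have homegaX : ∀ F : Set X, F.Finite →
      ∃ S ∈ {S | ∃ n, S = st (f ⁻¹' (K n)) (U n)}, F ⊆ S := by
    intro F hF
    obtain ⟨B, ⟨n, rfl⟩, hFB⟩ := homega (f '' F) (hF.image f)
    exact ⟨st (f ⁻¹' (K n)) (U n), ⟨n, rfl⟩, fun x hx =>
      key n (hFB ⟨x, hx, rfl⟩)⟩
  refine ⟨⟨hmemX, ?_⟩, homegaX⟩
  refine eq_univ_of_forall fun x => ?_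
  obtain ⟨S, hS, hxS⟩ := homegaX {x} (finite_singleton x)
  exact ⟨S, hS, hxS rfl⟩
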